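/- Let n ≥ 2 be an integer. Then, as κ → +∞, ∫_0^π e^{κ cos θ} (sin θ)^{n−2} dθ − 2^{(n−3)/2} e^{κ} κ^{−(n−1)/2} ( Γ((n−1)/2) − ((n−3)/4) Γ((n+1)/2) κ^{−1} ) = O( e^{κ} κ^{−(n−1)/2 − 2} ). -/

import Mathlib

open MeasureTheory Real Filter Asymptotics Set


lemma gamma_int {a b : ℝ} (ha : -1 < a) (hb : 0 < b) :
    ∫ t in Ioi (0:ℝ), t ^ a * Real.exp (-(b * t)) = Real.Gamma (a+1) * b ^ (-(a+1)) := by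
  have h := integral_rpow_mul_exp_neg_mul_rpow one_pos ha hb
  simp only [rpow_one, div_one, one_mul, neg_mul, mul_one] at h ⊢
  rw [h, mul_comm]

lemma gamma_integrable {a b : ℝ} (ha : -1 < a) (hb : 0 < b) :
    IntegrableOn (fun t => t ^ a * Real.exp (-(b * t))) (Ioi (0:ℝ)) := by
  have h0 : IntegrableOn (fun x : ℝ => Real.exp (-x) * x ^ a) (Ioi (b * 0)) := by
    rw [mul_zero]
    simpa using Real.GammaIntegral_convergent (show (0:ℝ) < a + 1 by linarith)
  have h1 : IntegrableOn (fun x : ℝ => Real.exp (-(b*x)) * (b*x) ^ a) (Ioi 0) :=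
    (integrableOn_Ioi_comp_mul_left_iff (fun x : ℝ => Real.exp (-x) * x ^ a) 0 hb).mpr h0
  have h2 := (h1.const_mul (b ^ (-a)))
  apply (integrableOn_congr_fun ?_ measurableSet_Ioi).mpr h2
  intro x hx
  simp only
  rw [Real.mul_rpow hb.le (le_of_lt hx), Real.rpow_neg hb.le]
  have : b ^ a ≠ 0 := (Real.rpow_pos_of_pos hb a).ne'
  field_simp


-- second-order Taylor bound for F x = (2-x)^a + a*2^(a-1)*x  around 0
lemma taylor_bound {a : ℝ} {t : ℝ} (ht : t ∈ Icc (0:ℝ) 1) :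
    |(2 - t) ^ a - 2 ^ a + a * 2 ^ (a-1) * t| ≤ (|a * (a-1)| * (1 + 2 ^ a)) * t ^ 2 := by
  set C := |a * (a-1)| * (1 + 2 ^ a) with hC
  set F : ℝ → ℝ := fun x => (2 - x) ^ a + a * 2 ^ (a-1) * x with hF
  set F' : ℝ → ℝ := fun x => a * 2 ^ (a-1) - a * (2 - x) ^ (a-1) with hF'
  set F'' : ℝ → ℝ := fun x => a * (a-1) * (2 - x) ^ (a-2) with hF''
  have hbase : ∀ x ∈ Icc (0:ℝ) 1, (1:ℝ) ≤ 2 - x ∧ 2 - x ≤ 2 := fun x hx =>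
    ⟨by linarith [hx.2], by linarith [hx.1]⟩
  have hder1 : ∀ x ∈ Icc (0:ℝ) 1, HasDerivWithinAt F (F' x) (Icc 0 1) x := by
    intro x hx
    have hne : (2 - x) ≠ 0 := by have := (hbase x hx).1; positivity
    have h1 : HasDerivAt (fun y : ℝ => (2 - y) ^ a) (-1 * a * (2-x) ^ (a-1)) x := by
      simpa using ((hasDerivAt_id x).const_sub 2).rpow_const (p := a) (Or.inl hne)
    have h2 : HasDerivAt F (-1 * a * (2-x) ^ (a-1) + a * 2 ^ (a-1)) x := by
      simpa using h1.fun_add ((hasDerivAt_id x).const_mul (a * 2 ^ (a-1)))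
    have : HasDerivAt F (F' x) x := by convert h2 using 1; simp [hF']; ring
    exact this.hasDerivWithinAt
  have hder2 : ∀ x ∈ Icc (0:ℝ) 1, HasDerivWithinAt F' (F'' x) (Icc 0 1) x := by
    intro x hx
    have hne : (2 - x) ≠ 0 := by have := (hbase x hx).1; positivity
    have h1 : HasDerivAt (fun y : ℝ => (2 - y) ^ (a-1)) (-1 * (a-1) * (2-x) ^ (a-1-1)) x := by
      simpa using ((hasDerivAt_id x).const_sub 2).rpow_const (p := a-1) (Or.inl hne)
    have h2 : HasDerivAt F' (-(a * (-1 * (a-1) * (2-x) ^ (a-1-1)))) x := by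
      simpa [hF'] using ((h1.const_mul a).const_sub (a * 2 ^ (a-1)))
    have : HasDerivAt F' (F'' x) x := by
      convert h2 using 1; simp [hF'']; ring_nf
    exact this.hasDerivWithinAt
  have hF''bound : ∀ x ∈ Icc (0:ℝ) 1, ‖F'' x‖ ≤ C := by
    intro x hx
    obtain ⟨h1, h2⟩ := hbase x hx
    have hpow : (2 - x) ^ (a-2) ≤ 1 + 2 ^ a := by
      rcases le_or_gt (a-2) 0 with h | h
      · have := Real.rpow_le_one_of_one_le_of_nonpos h1 h
        have h2a : (0:ℝ) ≤ 2 ^ a := (Real.rpow_pos_of_pos two_pos a).le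
        linarith
      · have b1 : (2 - x) ^ (a-2) ≤ (2:ℝ) ^ (a-2) :=
          Real.rpow_le_rpow (by linarith) h2 h.le
        have b2 : (2:ℝ) ^ (a-2) ≤ (2:ℝ) ^ a :=
          Real.rpow_le_rpow_of_exponent_le one_le_two (by linarith)
        linarith
    have hpos : (0:ℝ) ≤ (2 - x) ^ (a-2) := Real.rpow_nonneg (by linarith) _
    calc ‖F'' x‖ = |a * (a-1)| * (2 - x) ^ (a-2) := by
          rw [hF'']; simp only [Real.norm_eq_abs, abs_mul]
          rw [abs_of_nonneg hpos]
      _ ≤ C := by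
          rw [hC]
          exact mul_le_mul_of_nonneg_left hpow (abs_nonneg _)
  have hF'bound : ∀ x ∈ Icc (0:ℝ) 1, ‖F' x‖ ≤ C * x := by
    intro x hx
    have h0 : (0:ℝ) ∈ Icc (0:ℝ) 1 := by norm_num
    have := (convex_Icc (0:ℝ) 1).norm_image_sub_le_of_norm_hasDerivWithin_le
      hder2 hF''bound h0 hx
    have hF'0 : F' 0 = 0 := by simp [hF']
    simpa [hF'0, abs_of_nonneg hx.1] using this
  -- now bound F t - F 0 on Icc 0 t
  have hsub : Icc (0:ℝ) t ⊆ Icc (0:ℝ) 1 := Icc_subset_Icc le_rfl ht.2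
  have hder1' : ∀ x ∈ Icc (0:ℝ) t, HasDerivWithinAt F (F' x) (Icc 0 t) x :=
    fun x hx => (hder1 x (hsub hx)).mono hsub
  have hbd : ∀ x ∈ Icc (0:ℝ) t, ‖F' x‖ ≤ C * t := by
    intro x hx
    refine (hF'bound x (hsub hx)).trans ?_
    have hCnn : 0 ≤ C := by positivity
    exact mul_le_mul_of_nonneg_left hx.2 hCnn
  have h0 : (0:ℝ) ∈ Icc (0:ℝ) t := ⟨le_rfl, ht.1⟩
  have htm : t ∈ Icc (0:ℝ) t := ⟨ht.1, le_rfl⟩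
  have key := (convex_Icc (0:ℝ) t).norm_image_sub_le_of_norm_hasDerivWithin_le
    hder1' hbd h0 htm
  have hF0 : F 0 = 2 ^ a := by simp [hF]
  have : |F t - F 0| ≤ C * t * t := by
    simpa [abs_of_nonneg ht.1] using key
  calc |(2 - t) ^ a - 2 ^ a + a * 2 ^ (a-1) * t| = |F t - F 0| := by
        rw [hF0, hF]; ring_nf
    _ ≤ C * t * t := this
    _ = C * t ^ 2 := by ring


lemma cov (n : ℕ) (hn : 2 ≤ n) (κ : ℝ) :
    (∫ θ in Ioo 0 π, Real.exp (κ * Real.cos θ) * Real.sin θ ^ (n - 2)) =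
      ∫ t in Ioo (0:ℝ) 2, Real.exp (κ * (1 - t)) * (t * (2 - t)) ^ (((n:ℝ) - 3)/2) := by
  set a : ℝ := ((n:ℝ) - 3)/2 with hadef
  set f : ℝ → ℝ := fun θ => 1 - Real.cos θ with hf
  have hmono : StrictMonoOn f (Icc 0 π) := by
    intro x hx y hy hxy
    simp only [hf]
    have := Real.strictAntiOn_cos hx hy hxy
    linarith
  have himg : f '' (Ioo 0 π) = Ioo (0:ℝ) 2 := by
    apply Subset.antisymm
    · rintro _ ⟨θ, hθ, rfl⟩
      have h1 : Real.cos θ < Real.cos 0 :=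
        Real.strictAntiOn_cos (left_mem_Icc.mpr Real.pi_pos.le)
          ⟨hθ.1.le, hθ.2.le⟩ hθ.1
      have h2 : Real.cos π < Real.cos θ :=
        Real.strictAntiOn_cos ⟨hθ.1.le, hθ.2.le⟩ (right_mem_Icc.mpr Real.pi_pos.le) hθ.2
      simp only [Real.cos_zero, Real.cos_pi] at h1 h2
      exact ⟨by simp [hf]; linarith, by simp [hf]; linarith⟩
    · intro y hy
      have hcont : ContinuousOn f (Icc 0 π) := (continuous_const.sub Real.continuous_cos).continuousOn
      have := intermediate_value_Ioo Real.pi_pos.le hcont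
      apply this
      simp only [hf, Real.cos_zero, Real.cos_pi, sub_self, sub_neg_eq_add]
      norm_num
      exact hy
  have hderiv : ∀ θ ∈ Ioo (0:ℝ) π, HasDerivWithinAt f (Real.sin θ) (Ioo 0 π) θ := by
    intro θ hθ
    have : HasDerivAt f (Real.sin θ) θ := by
      simpa using (Real.hasDerivAt_cos θ).const_sub 1
    exact this.hasDerivWithinAt
  have hinj : InjOn f (Ioo 0 π) :=
    (hmono.injOn).mono (Ioo_subset_Icc_self)
  have key := integral_image_eq_integral_abs_deriv_smul measurableSet_Ioo hderiv hinj
    (fun t => Real.exp (κ * (1 - t)) * (t * (2 - t)) ^ a)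
  rw [himg] at key
  rw [key]
  apply setIntegral_congr_fun measurableSet_Ioo
  intro θ hθ
  have hsin : 0 < Real.sin θ := Real.sin_pos_of_pos_of_lt_pi hθ.1 hθ.2
  have h1 : f θ * (2 - f θ) = Real.sin θ ^ 2 := by
    simp only [hf]
    have := Real.sin_sq_add_cos_sq θ
    ring_nf
    nlinarith [Real.sin_sq_add_cos_sq θ]
  simp only [smul_eq_mul, abs_of_pos hsin, h1]
  have h2 : (Real.sin θ ^ 2 : ℝ) ^ a = Real.sin θ ^ ((n:ℝ) - 3) := by
    rw [← Real.rpow_natCast (Real.sin θ) 2, ← Real.rpow_mul hsin.le]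
    rw [hadef]
    congr 1
    push_cast
    ring
  have h3 : (1 : ℝ) - f θ = Real.cos θ := by simp [hf]
  rw [h2, h3]
  have h4 : Real.sin θ * (Real.exp (κ * Real.cos θ) * Real.sin θ ^ ((n:ℝ) - 3))
      = Real.exp (κ * Real.cos θ) * Real.sin θ ^ ((n:ℝ) - 2) := by
    rw [show ((n:ℝ) - 2) = 1 + ((n:ℝ) - 3) by ring, Real.rpow_add hsin, Real.rpow_one]
    ring
  rw [h4]
  congr 1
  rw [← Real.rpow_natCast (Real.sin θ) (n-2)]
  congr 1
  have : ((n - 2 : ℕ) : ℝ) = (n:ℝ) - 2 := by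
    have := Nat.cast_sub hn (R := ℝ); simpa using this
  rw [this]



lemma rpow_le_aux {a x : ℝ} (h1 : 1 ≤ x) (h2 : x ≤ 2) : x ^ a ≤ 1 + 2 ^ a := by
  rcases le_or_gt a 0 with h | h
  · have h3 := Real.rpow_le_one_of_one_le_of_nonpos h1 h
    have : (0:ℝ) < 2 ^ a := Real.rpow_pos_of_pos two_pos a
    linarith
  · have h3 : x ^ a ≤ (2:ℝ) ^ a := Real.rpow_le_rpow (by linarith) h2 h.le
    linarith

lemma i2t {a : ℝ} (ha : -1 < a) : IntegrableOn (fun t : ℝ => (2-t) ^ a) (Ioc 1 2) := by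
  have h := (intervalIntegral.intervalIntegrable_rpow' (a := 0) (b := 1) ha).comp_sub_left 2
  norm_num at h
  exact (intervalIntegrable_iff_integrableOn_Ioc_of_le (by norm_num)).mp h.symm

lemma model_integrable {a κ : ℝ} (ha : -1 < a) (hκ : 0 < κ) :
    IntegrableOn (fun t => (t ^ a * (2 ^ a - a * 2 ^ (a-1) * t)) * Real.exp (-(κ*t)))
      (Ioi (0:ℝ)) := by
  have h1 := (gamma_integrable ha hκ).const_mul ((2:ℝ) ^ a)
  have h2 := (gamma_integrable (show (-1:ℝ) < a + 1 by linarith) hκ).const_mul (a * 2 ^ (a-1))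
  apply (integrableOn_congr_fun ?_ measurableSet_Ioi).mpr (h1.sub h2)
  intro t ht
  simp only [Pi.sub_apply]
  rw [Real.rpow_add_one (ne_of_gt ht)]
  ring

lemma model_integral {a κ : ℝ} (ha : -1 < a) (hκ : 0 < κ) :
    ∫ t in Ioi (0:ℝ), (t ^ a * (2 ^ a - a * 2 ^ (a-1) * t)) * Real.exp (-(κ*t)) =
      2 ^ a * Real.Gamma (a+1) * κ ^ (-(a+1)) - a * 2 ^ (a-1) * Real.Gamma (a+2) * κ ^ (-(a+2)) := by
  have heq : ∀ t ∈ Ioi (0:ℝ),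
      (t ^ a * (2 ^ a - a * 2 ^ (a-1) * t)) * Real.exp (-(κ*t)) =
      2 ^ a * (t ^ a * Real.exp (-(κ*t))) - a * 2 ^ (a-1) * (t ^ (a+1) * Real.exp (-(κ*t))) := by
    intro t ht
    rw [Real.rpow_add_one (ne_of_gt ht)]
    ring
  rw [setIntegral_congr_fun measurableSet_Ioi heq, integral_sub
    ((gamma_integrable ha hκ).const_mul _)
    ((gamma_integrable (show (-1:ℝ) < a + 1 by linarith) hκ).const_mul _),
    integral_const_mul, integral_const_mul, gamma_int ha hκ,
    gamma_int (show (-1:ℝ) < a + 1 by linarith) hκ]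
  norm_num [show a + 1 + 1 = a + 2 by ring]
  ring

lemma full_integrable1 {a κ : ℝ} (ha : -1 < a) (hκ : 0 < κ) :
    IntegrableOn (fun t => (t * (2-t)) ^ a * Real.exp (-(κ*t))) (Ioc (0:ℝ) 1) := by
  apply Integrable.mono' (((gamma_integrable ha hκ).mono_set Ioc_subset_Ioi_self).const_mul
    ((1:ℝ) + 2 ^ a))
  · apply Measurable.aestronglyMeasurable
    fun_prop
  · filter_upwards [ae_restrict_mem measurableSet_Ioc] with t ht
    have ht1 : (0:ℝ) < t := ht.1
    have ht2 : (1:ℝ) ≤ 2 - t := by linarith [ht.2]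
    have ht3 : (2:ℝ) - t ≤ 2 := by linarith
    rw [Real.mul_rpow ht1.le (by linarith), Real.norm_eq_abs, abs_mul, abs_mul]
    rw [abs_of_nonneg (Real.rpow_nonneg ht1.le a),
      abs_of_nonneg (Real.rpow_nonneg (by linarith) a),
      abs_of_nonneg (Real.exp_pos _).le]
    have hle := rpow_le_aux (a := a) ht2 ht3
    have h0 : (0:ℝ) ≤ t ^ a := Real.rpow_nonneg ht1.le a
    have h1 : (0:ℝ) < Real.exp (-(κ*t)) := Real.exp_pos _
    calc t ^ a * (2-t) ^ a * Real.exp (-(κ*t)) = (2-t) ^ a * (t ^ a * Real.exp (-(κ*t))) := by ring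
      _ ≤ (1 + 2 ^ a) * (t ^ a * Real.exp (-(κ*t))) :=
          mul_le_mul_of_nonneg_right hle (by positivity)

lemma full_integrable2 {a κ : ℝ} (ha : -1 < a) (hκ : 0 ≤ κ) :
    IntegrableOn (fun t => (t * (2-t)) ^ a * Real.exp (-(κ*t))) (Ioc (1:ℝ) 2) := by
  apply Integrable.mono' ((i2t ha).const_mul ((1:ℝ) + 2 ^ a))
  · apply Measurable.aestronglyMeasurable
    fun_prop
  · filter_upwards [ae_restrict_mem measurableSet_Ioc] with t ht
    have ht1 : (1:ℝ) < t := ht.1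
    have ht4 : (0:ℝ) ≤ 2 - t := by linarith [ht.2]
    rw [Real.mul_rpow (by linarith) ht4, Real.norm_eq_abs, abs_mul, abs_mul]
    rw [abs_of_nonneg (Real.rpow_nonneg (by linarith) a),
      abs_of_nonneg (Real.rpow_nonneg ht4 a),
      abs_of_nonneg (Real.exp_pos _).le]
    have hta : t ^ a ≤ 1 + 2 ^ a := rpow_le_aux ht1.le ht.2
    have hexp : Real.exp (-(κ*t)) ≤ 1 := by
      rw [Real.exp_le_one_iff]
      nlinarith
    have h2t : (0:ℝ) ≤ (2-t) ^ a := Real.rpow_nonneg ht4 a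
    have h0 : (0:ℝ) ≤ t ^ a := Real.rpow_nonneg (by linarith) a
    calc t ^ a * (2-t) ^ a * Real.exp (-(κ*t)) ≤ t ^ a * (2-t) ^ a * 1 := by
          apply mul_le_mul_of_nonneg_left hexp (by positivity)
      _ = (2-t) ^ a * t ^ a := by ring
      _ ≤ (2-t) ^ a * (1 + 2 ^ a) := mul_le_mul_of_nonneg_left hta h2t
      _ = (1 + 2 ^ a) * (2-t) ^ a := by ring

lemma key_split {a κ : ℝ} (ha : -1 < a) (hκ : 0 < κ) :
    (∫ t in Ioc (0:ℝ) 2, (t * (2-t)) ^ a * Real.exp (-(κ*t))) -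
      (∫ t in Ioi (0:ℝ), (t ^ a * (2 ^ a - a * 2 ^ (a-1) * t)) * Real.exp (-(κ*t))) =
    (∫ t in Ioc (0:ℝ) 1, (t ^ a * ((2-t) ^ a - 2 ^ a + a * 2 ^ (a-1) * t)) * Real.exp (-(κ*t)))
    + (∫ t in Ioc (1:ℝ) 2, (t ^ a * ((2-t) ^ a - 2 ^ a + a * 2 ^ (a-1) * t)) * Real.exp (-(κ*t)))
    + (- ∫ t in Ioi (2:ℝ), (t ^ a * (2 ^ a - a * 2 ^ (a-1) * t)) * Real.exp (-(κ*t))) := by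
  have im := model_integrable ha hκ
  have im1 : IntegrableOn (fun t => (t ^ a * (2 ^ a - a * 2 ^ (a-1) * t)) * Real.exp (-(κ*t)))
      (Ioc (0:ℝ) 1) := im.mono_set Ioc_subset_Ioi_self
  have im2 : IntegrableOn (fun t => (t ^ a * (2 ^ a - a * 2 ^ (a-1) * t)) * Real.exp (-(κ*t)))
      (Ioc (1:ℝ) 2) :=
    im.mono_set (Ioc_subset_Ioi_self.trans (Ioi_subset_Ioi (by norm_num)))
  have im3 : IntegrableOn (fun t => (t ^ a * (2 ^ a - a * 2 ^ (a-1) * t)) * Real.exp (-(κ*t)))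
      (Ioi (2:ℝ)) := im.mono_set (Ioi_subset_Ioi (by norm_num))
  have if1 := full_integrable1 ha hκ
  have if2 := full_integrable2 ha hκ.le
  have hsplitF : (∫ t in Ioc (0:ℝ) 2, (t * (2-t)) ^ a * Real.exp (-(κ*t))) =
      (∫ t in Ioc (0:ℝ) 1, (t * (2-t)) ^ a * Real.exp (-(κ*t)))
      + (∫ t in Ioc (1:ℝ) 2, (t * (2-t)) ^ a * Real.exp (-(κ*t))) := by
    rw [← Ioc_union_Ioc_eq_Ioc (show (0:ℝ) ≤ 1 by norm_num) (show (1:ℝ) ≤ 2 by norm_num)]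
    exact setIntegral_union (Ioc_disjoint_Ioc_of_le le_rfl) measurableSet_Ioc if1 if2
  have hsplitM : (∫ t in Ioi (0:ℝ), (t ^ a * (2 ^ a - a * 2 ^ (a-1) * t)) * Real.exp (-(κ*t))) =
      (∫ t in Ioc (0:ℝ) 1, (t ^ a * (2 ^ a - a * 2 ^ (a-1) * t)) * Real.exp (-(κ*t)))
      + ((∫ t in Ioc (1:ℝ) 2, (t ^ a * (2 ^ a - a * 2 ^ (a-1) * t)) * Real.exp (-(κ*t)))
        + (∫ t in Ioi (2:ℝ), (t ^ a * (2 ^ a - a * 2 ^ (a-1) * t)) * Real.exp (-(κ*t)))) := by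
    rw [← Ioc_union_Ioi_eq_Ioi (show (0:ℝ) ≤ 1 by norm_num),
      setIntegral_union Ioc_disjoint_Ioi_same measurableSet_Ioi im1
        (im.mono_set (Ioi_subset_Ioi (by norm_num))),
      ← Ioc_union_Ioi_eq_Ioi (show (1:ℝ) ≤ 2 by norm_num),
      setIntegral_union Ioc_disjoint_Ioi_same measurableSet_Ioi im2 im3]
  have hd1 : (∫ t in Ioc (0:ℝ) 1, (t ^ a * ((2-t) ^ a - 2 ^ a + a * 2 ^ (a-1) * t)) *
      Real.exp (-(κ*t))) =
      (∫ t in Ioc (0:ℝ) 1, (t * (2-t)) ^ a * Real.exp (-(κ*t)))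
      - (∫ t in Ioc (0:ℝ) 1, (t ^ a * (2 ^ a - a * 2 ^ (a-1) * t)) * Real.exp (-(κ*t))) := by
    rw [← integral_sub if1 im1]
    apply setIntegral_congr_fun measurableSet_Ioc
    intro t ht
    simp only [Pi.sub_apply]
    rw [Real.mul_rpow ht.1.le (by linarith [ht.2] : (0:ℝ) ≤ 2 - t)]
    ring
  have hd2 : (∫ t in Ioc (1:ℝ) 2, (t ^ a * ((2-t) ^ a - 2 ^ a + a * 2 ^ (a-1) * t)) *
      Real.exp (-(κ*t))) =
      (∫ t in Ioc (1:ℝ) 2, (t * (2-t)) ^ a * Real.exp (-(κ*t)))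
      - (∫ t in Ioc (1:ℝ) 2, (t ^ a * (2 ^ a - a * 2 ^ (a-1) * t)) * Real.exp (-(κ*t))) := by
    rw [← integral_sub if2 im2]
    apply setIntegral_congr_fun measurableSet_Ioc
    intro t ht
    simp only [Pi.sub_apply]
    rw [Real.mul_rpow (by linarith [ht.1] : (0:ℝ) ≤ t) (by linarith [ht.2] : (0:ℝ) ≤ 2 - t)]
    ring
  rw [hsplitF, hsplitM, hd1, hd2]
  ring


lemma bound1 {a κ : ℝ} (ha : -1 < a) (hκ : 0 < κ) :
    ‖∫ t in Ioc (0:ℝ) 1, (t ^ a * ((2-t) ^ a - 2 ^ a + a * 2 ^ (a-1) * t)) * Real.exp (-(κ*t))‖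
      ≤ (|a * (a-1)| * (1 + 2 ^ a)) * Real.Gamma (a+3) * κ ^ (-(a+3)) := by
  set C : ℝ := |a * (a-1)| * (1 + 2 ^ a) with hC
  have hCnn : 0 ≤ C := by positivity
  have hg2 : IntegrableOn (fun t => t ^ (a+2) * Real.exp (-(κ*t))) (Ioi (0:ℝ)) :=
    gamma_integrable (by linarith) hκ
  calc ‖∫ t in Ioc (0:ℝ) 1, (t ^ a * ((2-t) ^ a - 2 ^ a + a * 2 ^ (a-1) * t)) *
        Real.exp (-(κ*t))‖
      ≤ ∫ t in Ioc (0:ℝ) 1, C * (t ^ (a+2) * Real.exp (-(κ*t))) := by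
        apply norm_integral_le_of_norm_le ((hg2.mono_set Ioc_subset_Ioi_self).const_mul C)
        filter_upwards [ae_restrict_mem measurableSet_Ioc] with t ht
        have ht1 : (0:ℝ) < t := ht.1
        have hsq : t ^ (a+2) = t ^ a * t ^ 2 := by
          rw [Real.rpow_add ht1, ← Real.rpow_natCast t 2]
          norm_num
        rw [Real.norm_eq_abs, abs_mul, abs_mul, abs_of_nonneg (Real.rpow_nonneg ht1.le a),
          abs_of_nonneg (Real.exp_pos _).le, hsq]
        have htb := taylor_bound (a := a) ⟨ht1.le, ht.2⟩
        calc t ^ a * |(2-t) ^ a - 2 ^ a + a * 2 ^ (a-1) * t| * Real.exp (-(κ*t))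
            ≤ t ^ a * (C * t ^ 2) * Real.exp (-(κ*t)) := by
              apply mul_le_mul_of_nonneg_right _ (Real.exp_pos _).le
              exact mul_le_mul_of_nonneg_left htb (Real.rpow_nonneg ht1.le a)
          _ = C * (t ^ a * t ^ 2 * Real.exp (-(κ*t))) := by ring
    _ ≤ C * ∫ t in Ioi (0:ℝ), t ^ (a+2) * Real.exp (-(κ*t)) := by
        rw [← integral_const_mul]
        apply setIntegral_mono_set ((hg2).const_mul C)
        · filter_upwards [ae_restrict_mem measurableSet_Ioi] with t ht
          have : (0:ℝ) < t := ht
          positivity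
        · exact HasSubset.Subset.eventuallyLE Ioc_subset_Ioi_self
    _ = C * Real.Gamma (a+3) * κ ^ (-(a+3)) := by
        rw [gamma_int (by linarith) hκ]
        norm_num [show a + 2 + 1 = a + 3 by ring]
        ring

lemma bound2 {a : ℝ} (ha : -1 < a) : ∃ C : ℝ, ∀ κ : ℝ, 0 ≤ κ →
    ‖∫ t in Ioc (1:ℝ) 2, (t ^ a * ((2-t) ^ a - 2 ^ a + a * 2 ^ (a-1) * t)) *
      Real.exp (-(κ*t))‖ ≤ C * Real.exp (-κ) := by
  set B : ℝ → ℝ := fun t => (1 + 2 ^ a) * ((2-t) ^ a + (2 ^ a + |a| * 2 ^ a)) with hB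
  have hBint : IntegrableOn B (Ioc (1:ℝ) 2) := by
    apply Integrable.const_mul
    exact (i2t ha).add (integrableOn_const measure_Ioc_lt_top.ne)
  refine ⟨∫ t in Ioc (1:ℝ) 2, B t, fun κ hκ => ?_⟩
  calc ‖∫ t in Ioc (1:ℝ) 2, (t ^ a * ((2-t) ^ a - 2 ^ a + a * 2 ^ (a-1) * t)) *
        Real.exp (-(κ*t))‖
      ≤ ∫ t in Ioc (1:ℝ) 2, Real.exp (-κ) * B t := by
        apply norm_integral_le_of_norm_le (hBint.const_mul _)
        filter_upwards [ae_restrict_mem measurableSet_Ioc] with t ht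
        have ht1 : (1:ℝ) < t := ht.1
        have ht4 : (0:ℝ) ≤ 2 - t := by linarith [ht.2]
        have h2a : (2:ℝ) ^ (a-1) * 2 = 2 ^ a := by
          rw [← Real.rpow_add_one two_ne_zero (a-1)]; norm_num
        have hgb : |(2-t) ^ a - 2 ^ a + a * 2 ^ (a-1) * t| ≤ (2-t) ^ a + (2 ^ a + |a| * 2 ^ a) := by
          have h1 : |(2-t) ^ a - 2 ^ a + a * 2 ^ (a-1) * t|
              ≤ |(2-t) ^ a| + |2 ^ a| + |a * 2 ^ (a-1) * t| := by
            calc |(2-t) ^ a - 2 ^ a + a * 2 ^ (a-1) * t|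
                ≤ |(2-t) ^ a - 2 ^ a| + |a * 2 ^ (a-1) * t| := abs_add_le _ _
              _ ≤ |(2-t) ^ a| + |2 ^ a| + |a * 2 ^ (a-1) * t| := by
                  linarith [abs_sub (((2:ℝ)-t) ^ a) ((2:ℝ) ^ a)]
          have h2 : |a * 2 ^ (a-1) * t| ≤ |a| * 2 ^ a := by
            rw [abs_mul, abs_mul, abs_of_nonneg (Real.rpow_nonneg (by norm_num : (0:ℝ) ≤ 2) _),
              abs_of_nonneg (by linarith : (0:ℝ) ≤ t)]
            calc |a| * 2 ^ (a-1) * t ≤ |a| * 2 ^ (a-1) * 2 := by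
                  apply mul_le_mul_of_nonneg_left ht.2 (by positivity)
              _ = |a| * 2 ^ a := by rw [mul_assoc, h2a]
          rw [abs_of_nonneg (Real.rpow_nonneg ht4 a), abs_of_nonneg
            (Real.rpow_nonneg (by norm_num : (0:ℝ) ≤ 2) a)] at h1
          linarith
        have hexp : Real.exp (-(κ*t)) ≤ Real.exp (-κ) := by
          apply Real.exp_le_exp.mpr; nlinarith
        have hta : t ^ a ≤ 1 + 2 ^ a := rpow_le_aux ht1.le ht.2
        rw [Real.norm_eq_abs, abs_mul, abs_mul, abs_of_nonneg (Real.rpow_nonneg (by linarith) a),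
          abs_of_nonneg (Real.exp_pos _).le, hB]
        have hBnn : (0:ℝ) ≤ (2-t) ^ a + (2 ^ a + |a| * 2 ^ a) := by
          have := Real.rpow_nonneg ht4 a; positivity
        calc t ^ a * |(2-t) ^ a - 2 ^ a + a * 2 ^ (a-1) * t| * Real.exp (-(κ*t))
            ≤ (1 + 2 ^ a) * ((2-t) ^ a + (2 ^ a + |a| * 2 ^ a)) * Real.exp (-κ) := by
              apply mul_le_mul (mul_le_mul hta hgb (abs_nonneg _) (by positivity)) hexp
                (Real.exp_pos _).le (by positivity)
          _ = Real.exp (-κ) * ((1 + 2 ^ a) * ((2-t) ^ a + (2 ^ a + |a| * 2 ^ a))) := by ring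
    _ = Real.exp (-κ) * ∫ t in Ioc (1:ℝ) 2, B t := integral_const_mul _ _
    _ = (∫ t in Ioc (1:ℝ) 2, B t) * Real.exp (-κ) := mul_comm _ _

lemma bound3 {a κ : ℝ} (ha : -1 < a) (haa : -(1/2:ℝ) ≤ a) (hκ : 2 ≤ κ) :
    ‖∫ t in Ioi (2:ℝ), (t ^ a * (2 ^ a - a * 2 ^ (a-1) * t)) * Real.exp (-(κ*t))‖
      ≤ (2 ^ a * Real.Gamma (a+1) + |a| * 2 ^ (a-1) * Real.Gamma (a+2)) * Real.exp (-κ) := by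
  have hκ2 : (0:ℝ) < κ/2 := by linarith
  set G : ℝ → ℝ := fun t => Real.exp (-κ) * (2 ^ a * (t ^ a * Real.exp (-(κ/2*t)))
    + |a| * 2 ^ (a-1) * (t ^ (a+1) * Real.exp (-(κ/2*t)))) with hG
  have hGint0 : IntegrableOn G (Ioi (0:ℝ)) := by
    apply Integrable.const_mul
    exact ((gamma_integrable ha hκ2).const_mul _).add
      ((gamma_integrable (show (-1:ℝ) < a+1 by linarith) hκ2).const_mul _)
  calc ‖∫ t in Ioi (2:ℝ), (t ^ a * (2 ^ a - a * 2 ^ (a-1) * t)) * Real.exp (-(κ*t))‖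
      ≤ ∫ t in Ioi (2:ℝ), G t := by
        apply norm_integral_le_of_norm_le (hGint0.mono_set (Ioi_subset_Ioi (by norm_num)))
        filter_upwards [ae_restrict_mem measurableSet_Ioi] with t ht
        have ht2 : (2:ℝ) < t := ht
        have htp : (0:ℝ) < t := by linarith
        have hexp : Real.exp (-(κ*t)) ≤ Real.exp (-κ) * Real.exp (-(κ/2*t)) := by
          rw [← Real.exp_add]
          apply Real.exp_le_exp.mpr
          nlinarith
        have habs : |t ^ a * (2 ^ a - a * 2 ^ (a-1) * t)|
            ≤ 2 ^ a * t ^ a + |a| * 2 ^ (a-1) * t ^ (a+1) := by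
          rw [abs_mul, abs_of_nonneg (Real.rpow_nonneg htp.le a)]
          have h1 : |2 ^ a - a * 2 ^ (a-1) * t| ≤ 2 ^ a + |a| * 2 ^ (a-1) * t := by
            have := abs_sub ((2:ℝ) ^ a) (a * 2 ^ (a-1) * t)
            have h2 : |a * 2 ^ (a-1) * t| = |a| * 2 ^ (a-1) * t := by
              rw [abs_mul, abs_mul, abs_of_nonneg (Real.rpow_nonneg (by norm_num) _),
                abs_of_nonneg htp.le]
            have h3 : |(2:ℝ) ^ a| = 2 ^ a := abs_of_nonneg (Real.rpow_nonneg (by norm_num) _)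
            calc |2 ^ a - a * 2 ^ (a-1) * t| ≤ |(2:ℝ) ^ a| + |a * 2 ^ (a-1) * t| := abs_sub _ _
              _ = 2 ^ a + |a| * 2 ^ (a-1) * t := by rw [h2, h3]
          calc t ^ a * |2 ^ a - a * 2 ^ (a-1) * t|
              ≤ t ^ a * (2 ^ a + |a| * 2 ^ (a-1) * t) :=
                mul_le_mul_of_nonneg_left h1 (Real.rpow_nonneg htp.le a)
            _ = 2 ^ a * t ^ a + |a| * 2 ^ (a-1) * (t ^ a * t) := by ring
            _ = 2 ^ a * t ^ a + |a| * 2 ^ (a-1) * t ^ (a+1) := by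
                rw [← Real.rpow_add_one htp.ne' a]
        rw [Real.norm_eq_abs, abs_mul, abs_of_nonneg (Real.exp_pos _).le, hG]
        have hnn : (0:ℝ) ≤ 2 ^ a * t ^ a + |a| * 2 ^ (a-1) * t ^ (a+1) := by
          have h1 := Real.rpow_nonneg htp.le a
          have h2 := Real.rpow_nonneg htp.le (a+1)
          positivity
        calc |t ^ a * (2 ^ a - a * 2 ^ (a-1) * t)| * Real.exp (-(κ*t))
            ≤ (2 ^ a * t ^ a + |a| * 2 ^ (a-1) * t ^ (a+1)) *
              (Real.exp (-κ) * Real.exp (-(κ/2*t))) :=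
              mul_le_mul habs hexp (Real.exp_pos _).le hnn
          _ = Real.exp (-κ) * (2 ^ a * (t ^ a * Real.exp (-(κ/2*t)))
              + |a| * 2 ^ (a-1) * (t ^ (a+1) * Real.exp (-(κ/2*t)))) := by ring
    _ ≤ ∫ t in Ioi (0:ℝ), G t := by
        apply setIntegral_mono_set hGint0
        · filter_upwards [ae_restrict_mem measurableSet_Ioi] with t ht
          have htp : (0:ℝ) < t := ht
          have h1 := Real.rpow_nonneg htp.le a
          have h2 := Real.rpow_nonneg htp.le (a+1)
          simp only [hG]
          positivity
        · exact HasSubset.Subset.eventuallyLE (Ioi_subset_Ioi (by norm_num))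
    _ = Real.exp (-κ) * (2 ^ a * (Real.Gamma (a+1) * (κ/2) ^ (-(a+1)))
        + |a| * 2 ^ (a-1) * (Real.Gamma (a+2) * (κ/2) ^ (-(a+2)))) := by
        rw [hG, integral_const_mul, integral_add ((gamma_integrable ha hκ2).const_mul _)
          ((gamma_integrable (show (-1:ℝ) < a+1 by linarith) hκ2).const_mul _),
          integral_const_mul, integral_const_mul, gamma_int ha hκ2,
          gamma_int (show (-1:ℝ) < a+1 by linarith) hκ2]
        norm_num [show a + 1 + 1 = a + 2 by ring]
    _ ≤ (2 ^ a * Real.Gamma (a+1) + |a| * 2 ^ (a-1) * Real.Gamma (a+2)) * Real.exp (-κ) := by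
        have hk1 : (1:ℝ) ≤ κ/2 := by linarith
        have hp1 : (κ/2) ^ (-(a+1)) ≤ 1 :=
          Real.rpow_le_one_of_one_le_of_nonpos hk1 (by linarith)
        have hp2 : (κ/2) ^ (-(a+2)) ≤ 1 :=
          Real.rpow_le_one_of_one_le_of_nonpos hk1 (by linarith)
        have hG1 : (0:ℝ) ≤ Real.Gamma (a+1) := Real.Gamma_nonneg_of_nonneg (by linarith)
        have hG2 : (0:ℝ) ≤ Real.Gamma (a+2) := Real.Gamma_nonneg_of_nonneg (by linarith)
        have hr1 : (0:ℝ) ≤ (κ/2) ^ (-(a+1)) := Real.rpow_nonneg hκ2.le _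
        have hr2 : (0:ℝ) ≤ (κ/2) ^ (-(a+2)) := Real.rpow_nonneg hκ2.le _
        rw [mul_comm (2 ^ a * Real.Gamma (a+1) + |a| * 2 ^ (a-1) * Real.Gamma (a+2))
          (Real.exp (-κ))]
        apply mul_le_mul_of_nonneg_left _ (Real.exp_pos _).le
        have hb1 : (0:ℝ) ≤ (2:ℝ) ^ a := Real.rpow_nonneg (by norm_num) _
        have hb2 : (0:ℝ) ≤ (2:ℝ) ^ (a-1) := Real.rpow_nonneg (by norm_num) _
        nlinarith [mul_nonneg (mul_nonneg (abs_nonneg a) hb2) hG2,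
          mul_nonneg hb1 hG1]


theorem normalization_integral_expansion (n : ℕ) (hn : 2 ≤ n) :
    (fun κ : ℝ =>
        (∫ θ in Set.Ioo 0 π, Real.exp (κ * Real.cos θ) * Real.sin θ ^ (n - 2)) -
          (2 : ℝ) ^ (((n : ℝ) - 3) / 2) * Real.exp κ * κ ^ (-(((n : ℝ) - 1) / 2)) *
            (Real.Gamma (((n : ℝ) - 1) / 2) -
              (((n : ℝ) - 3) / 4) * Real.Gamma (((n : ℝ) + 1) / 2) * κ⁻¹))
      =O[atTop] fun κ : ℝ => Real.exp κ * κ ^ (-(((n : ℝ) - 1) / 2) - 2) := by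
  have hn2 : (2:ℝ) ≤ (n:ℝ) := by exact_mod_cast hn
  set a : ℝ := ((n:ℝ) - 3)/2 with hadef
  have ha1 : -1 < a := by rw [hadef]; linarith
  have haa : -(1/2:ℝ) ≤ a := by rw [hadef]; linarith
  have e1 : ((n:ℝ) - 1)/2 = a + 1 := by rw [hadef]; ring
  have e2 : ((n:ℝ) + 1)/2 = a + 2 := by rw [hadef]; ring
  have e3 : ((n:ℝ) - 3)/4 = a/2 := by rw [hadef]; ring
  have e4 : ∀ κ : ℝ, κ ^ (-(a+1) - 2) = κ ^ (-(a+3)) := by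
    intro κ; congr 1; ring
  simp only [e1, e2, e3, e4]
  set T1 : ℝ → ℝ := fun κ =>
    ∫ t in Ioc (0:ℝ) 1, (t ^ a * ((2-t) ^ a - 2 ^ a + a * 2 ^ (a-1) * t)) * Real.exp (-(κ*t))
    with hT1
  set T2 : ℝ → ℝ := fun κ =>
    ∫ t in Ioc (1:ℝ) 2, (t ^ a * ((2-t) ^ a - 2 ^ a + a * 2 ^ (a-1) * t)) * Real.exp (-(κ*t))
    with hT2
  set T3 : ℝ → ℝ := fun κ =>
    -∫ t in Ioi (2:ℝ), (t ^ a * (2 ^ a - a * 2 ^ (a-1) * t)) * Real.exp (-(κ*t)) with hT3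
  have keyev : ∀ κ : ℝ, 1 ≤ κ →
      (∫ θ in Set.Ioo 0 π, Real.exp (κ * Real.cos θ) * Real.sin θ ^ (n - 2)) -
        (2:ℝ) ^ a * Real.exp κ * κ ^ (-(a+1)) *
          (Real.Gamma (a+1) - a/2 * Real.Gamma (a+2) * κ⁻¹)
      = Real.exp κ * T1 κ + Real.exp κ * T2 κ + Real.exp κ * T3 κ := by
    intro κ hκ1
    have hκ : (0:ℝ) < κ := by linarith
    have hI : (∫ θ in Set.Ioo 0 π, Real.exp (κ * Real.cos θ) * Real.sin θ ^ (n - 2)) =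
        Real.exp κ * ∫ t in Ioc (0:ℝ) 2, (t * (2-t)) ^ a * Real.exp (-(κ*t)) := by
      rw [cov n hn κ, ← hadef, ← integral_Ioc_eq_integral_Ioo, ← integral_const_mul]
      apply setIntegral_congr_fun measurableSet_Ioc
      intro t ht
      simp only
      rw [show Real.exp κ * ((t * (2-t)) ^ a * Real.exp (-(κ*t)))
          = Real.exp (κ + -(κ*t)) * (t * (2-t)) ^ a from by rw [Real.exp_add]; ring,
        show κ * (1-t) = κ + -(κ*t) from by ring]
    have hM : (2:ℝ) ^ a * Real.exp κ * κ ^ (-(a+1)) *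
        (Real.Gamma (a+1) - a/2 * Real.Gamma (a+2) * κ⁻¹) =
        Real.exp κ * ∫ t in Ioi (0:ℝ),
          (t ^ a * (2 ^ a - a * 2 ^ (a-1) * t)) * Real.exp (-(κ*t)) := by
      rw [model_integral ha1 hκ]
      have h2a : (2:ℝ) ^ (a-1) * 2 = 2 ^ a := by
        rw [← Real.rpow_add_one two_ne_zero (a-1)]; norm_num
      have hκp : κ ^ (-(a+2)) = κ ^ (-(a+1)) * κ⁻¹ := by
        rw [show -(a+2) = -(a+1) + (-1) by ring, Real.rpow_add hκ, Real.rpow_neg_one]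
      rw [hκp]
      linear_combination (Real.exp κ * Real.Gamma (a+2) * κ ^ (-(a+1)) * κ⁻¹ * a / 2) * h2a
    rw [hI, hM, ← mul_add, ← mul_add, ← mul_sub, key_split ha1 hκ]
  have hO1 : (fun κ : ℝ => Real.exp κ * T1 κ) =O[atTop]
      (fun κ : ℝ => Real.exp κ * κ ^ (-(a+3))) := by
    apply IsBigO.mul (isBigO_refl _ atTop)
    rw [isBigO_iff]
    refine ⟨|a * (a-1)| * (1 + 2 ^ a) * Real.Gamma (a+3), ?_⟩
    filter_upwards [eventually_ge_atTop (1:ℝ)] with κ hκ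
    have hb := bound1 (κ := κ) ha1 (by linarith)
    calc ‖T1 κ‖ ≤ |a * (a-1)| * (1 + 2 ^ a) * Real.Gamma (a+3) * κ ^ (-(a+3)) := hb
      _ = |a * (a-1)| * (1 + 2 ^ a) * Real.Gamma (a+3) * ‖κ ^ (-(a+3))‖ := by
          rw [Real.norm_eq_abs, abs_of_nonneg (Real.rpow_nonneg (by linarith) _)]
  have hexpO : (fun κ : ℝ => Real.exp (-κ)) =O[atTop] (fun κ : ℝ => κ ^ (-(a+3))) := by
    have h := (isLittleO_rpow_exp_atTop (a+3)).isBigO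
    have h2 := h.mul (isBigO_refl (fun κ : ℝ => Real.exp (-κ) * κ ^ (-(a+3))) atTop)
    apply h2.congr'
    · filter_upwards [eventually_gt_atTop (0:ℝ)] with κ hκ
      have : κ ^ (a+3) * κ ^ (-(a+3)) = 1 := by
        rw [← Real.rpow_add hκ, show a + 3 + -(a+3) = 0 from by ring, Real.rpow_zero]
      calc κ ^ (a+3) * (Real.exp (-κ) * κ ^ (-(a+3)))
          = (κ ^ (a+3) * κ ^ (-(a+3))) * Real.exp (-κ) := by ring
        _ = Real.exp (-κ) := by rw [this, one_mul]
    · filter_upwards [eventually_gt_atTop (0:ℝ)] with κ hκ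
      have : Real.exp κ * Real.exp (-κ) = 1 := by
        rw [← Real.exp_add]; norm_num
      calc Real.exp κ * (Real.exp (-κ) * κ ^ (-(a+3)))
          = (Real.exp κ * Real.exp (-κ)) * κ ^ (-(a+3)) := by ring
        _ = κ ^ (-(a+3)) := by rw [this, one_mul]
  have hO2 : (fun κ : ℝ => Real.exp κ * T2 κ) =O[atTop]
      (fun κ : ℝ => Real.exp κ * κ ^ (-(a+3))) := by
    apply IsBigO.mul (isBigO_refl _ atTop)
    refine IsBigO.trans ?_ hexpO
    obtain ⟨C2, hC2⟩ := bound2 ha1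
    rw [isBigO_iff]
    refine ⟨C2, ?_⟩
    filter_upwards [eventually_ge_atTop (0:ℝ)] with κ hκ
    calc ‖T2 κ‖ ≤ C2 * Real.exp (-κ) := hC2 κ hκ
      _ = C2 * ‖Real.exp (-κ)‖ := by
          rw [Real.norm_eq_abs, abs_of_nonneg (Real.exp_pos _).le]
  have hO3 : (fun κ : ℝ => Real.exp κ * T3 κ) =O[atTop]
      (fun κ : ℝ => Real.exp κ * κ ^ (-(a+3))) := by
    apply IsBigO.mul (isBigO_refl _ atTop)
    refine IsBigO.trans ?_ hexpO
    rw [isBigO_iff]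
    refine ⟨2 ^ a * Real.Gamma (a+1) + |a| * 2 ^ (a-1) * Real.Gamma (a+2), ?_⟩
    filter_upwards [eventually_ge_atTop (2:ℝ)] with κ hκ
    calc ‖T3 κ‖ = ‖∫ t in Ioi (2:ℝ), (t ^ a * (2 ^ a - a * 2 ^ (a-1) * t)) *
          Real.exp (-(κ*t))‖ := by rw [hT3]; exact norm_neg _
      _ ≤ (2 ^ a * Real.Gamma (a+1) + |a| * 2 ^ (a-1) * Real.Gamma (a+2)) * Real.exp (-κ) :=
          bound3 ha1 haa hκ
      _ = (2 ^ a * Real.Gamma (a+1) + |a| * 2 ^ (a-1) * Real.Gamma (a+2)) * ‖Real.exp (-κ)‖ := by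
          rw [Real.norm_eq_abs, abs_of_nonneg (Real.exp_pos _).le]
  have hsum := (hO1.add hO2).add hO3
  apply Filter.EventuallyEq.trans_isBigO _ hsum
  filter_upwards [eventually_ge_atTop (1:ℝ)] with κ hκ
  exact keyev κ hκ
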